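/- Let (G,B) be a topological bornological group with the Howe-Moore property and let U be a proper open subgroup of G. Then U is bounded, i.e. U ∈ B. -/

import Mathlib

open scoped Pointwise

universe u

/-- A group bornology on a group `G`: a collection of subsets containing singletons and
closed under subsets, inverses, finite unions and products. -/
structure GroupBornology (G : Type u) [Group G] where
  sets : Set (Set G)
  singleton_mem : ∀ g : G, {g} ∈ sets
  subset_mem : ∀ A ∈ sets, ∀ B ⊆ A, B ∈ sets
  inv_mem : ∀ A ∈ sets, A⁻¹ ∈ sets
  union_mem : ∀ A ∈ sets, ∀ B ∈ sets, A ∪ B ∈ sets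
  mul_mem : ∀ A ∈ sets, ∀ B ∈ sets, A * B ∈ sets

/-- A subset of a topological group is coarsely bounded if it has finite diameter for every
continuous left-invariant pseudometric. -/
def CoarselyBounded {G : Type u} [Group G] [TopologicalSpace G] (A : Set G) : Prop :=
  ∀ d : G → G → ℝ, Continuous (fun p : G × G => d p.1 p.2) →
    (∀ x, d x x = 0) → (∀ x y, d x y = d y x) →
    (∀ x y z, d x z ≤ d x y + d y z) →
    (∀ g x y, d (g * x) (g * y) = d x y) →
    ∃ C : ℝ, ∀ x ∈ A, ∀ y ∈ A, d x y ≤ C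

noncomputable section HMaux

namespace HMaux

variable {α : Type u}

local notation "ℋ" => lp (fun _ : α => ℂ) 2

lemma two_toReal_pos : (0:ℝ) < (2:ENNReal).toReal := by norm_num

lemma memℓp_comp (e : α ≃ α) (f : ℋ) : Memℓp (fun i => f (e i)) 2 := by
  apply memℓp_gen
  have h : Summable fun i => ‖f i‖ ^ (2:ENNReal).toReal :=
    (memℓp_gen_iff two_toReal_pos).1 (lp.memℓp f)
  exact (e.summable_iff (f := fun i => ‖f i‖ ^ (2:ENNReal).toReal)).2 h

/-- The permutation representation on `ℓ²(α)`. -/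
def permIso (e : Equiv.Perm α) : ℋ ≃ₗᵢ[ℂ] ℋ where
  toLinearEquiv :=
  { toFun := fun f => ⟨fun i => f (e.symm i), memℓp_comp e.symm f⟩
    map_add' := fun f g => lp.ext (funext fun i => rfl)
    map_smul' := fun c f => lp.ext (funext fun i => rfl)
    invFun := fun f => ⟨fun i => f (e i), memℓp_comp e f⟩
    left_inv := fun f => lp.ext (funext fun i => by simp)
    right_inv := fun f => lp.ext (funext fun i => by simp) }
  norm_map' := fun f => by
    show ‖(⟨fun i => f (e.symm i), memℓp_comp e.symm f⟩ : ℋ)‖ = ‖f‖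
    rw [lp.norm_eq_tsum_rpow two_toReal_pos, lp.norm_eq_tsum_rpow two_toReal_pos f]
    congr 1
    exact e.symm.tsum_eq (f := fun i => ‖f i‖ ^ (2:ENNReal).toReal)

@[simp] lemma permIso_apply (e : Equiv.Perm α) (f : ℋ) (i : α) :
    (permIso e f : ∀ _ : α, ℂ) i = f (e.symm i) := rfl

lemma permIso_single [DecidableEq α] (e : Equiv.Perm α) (x : α) (a : ℂ) :
    permIso e (lp.single 2 x a) = lp.single 2 (e x) a := by
  refine lp.ext (funext fun i => ?_)
  by_cases h : i = e x
  · subst h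
    rw [permIso_apply, Equiv.symm_apply_apply, lp.single_apply_self, lp.single_apply_self]
  · rw [permIso_apply, lp.single_apply_ne _ _ _ h,
      lp.single_apply_ne _ _ _ (fun hc => h (by rw [← hc, Equiv.apply_symm_apply]))]

/-- The permutation representation as a monoid hom. -/
def permHom : Equiv.Perm α →* (ℋ ≃ₗᵢ[ℂ] ℋ) where
  toFun := permIso
  map_one' := LinearIsometryEquiv.ext fun _ => lp.ext rfl
  map_mul' := fun _ _ => LinearIsometryEquiv.ext fun _ => lp.ext rfl

variable (α) in
/-- The submodule of constant functions in `ℓ²(α)`. -/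
def constSubmodule : Submodule ℂ ℋ where
  carrier := {f : ℋ | ∀ x y : α, f x = f y}
  add_mem' := fun {f g} hf hg x y => by
    simp only [lp.coeFn_add, Pi.add_apply, hf x y, hg x y]
  zero_mem' := fun x y => by simp
  smul_mem' := fun c f hf x y => by
    simp only [lp.coeFn_smul, Pi.smul_apply, hf x y]

lemma mem_constSubmodule_iff {f : ℋ} : f ∈ constSubmodule α ↔ ∀ x y : α, f x = f y := Iff.rfl

variable (G : Type*) [Group G] [MulAction G α]

variable (α) in
/-- The permutation representation of a group acting on `α`. -/
def rep : G →* (ℋ ≃ₗᵢ[ℂ] ℋ) := permHom.comp (MulAction.toPermHom G α)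

lemma rep_apply (g : G) (f : ℋ) (x : α) : (rep α G g f : ∀ _ : α, ℂ) x = f (g⁻¹ • x) := rfl

lemma rep_single [DecidableEq α] (g : G) (x : α) (a : ℂ) :
    rep α G g (lp.single 2 x a) = lp.single 2 (g • x) a :=
  permIso_single (MulAction.toPermHom G α g) x a

lemma rep_mem_const (g : G) (f : ℋ) (hf : f ∈ constSubmodule α) :
    rep α G g f ∈ constSubmodule α := by
  intro x y
  rw [rep_apply, rep_apply]
  exact hf _ _

lemma rep_mem_orth (g : G) (v : ℋ) (hv : v ∈ (constSubmodule α)ᗮ) :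
    rep α G g v ∈ (constSubmodule α)ᗮ := by
  rw [Submodule.mem_orthogonal] at hv ⊢
  intro u hu
  have h1 : rep α G g (rep α G g⁻¹ u) = u := by
    have : rep α G g (rep α G g⁻¹ u) = (rep α G g * rep α G g⁻¹) u := rfl
    rw [this, ← map_mul, mul_inv_cancel, map_one, LinearIsometryEquiv.coe_one, id_eq]
  calc (inner ℂ u (rep α G g v) : ℂ)
      = inner ℂ (rep α G g (rep α G g⁻¹ u)) (rep α G g v) := by rw [h1]
    _ = inner ℂ (rep α G g⁻¹ u) v := (rep α G g).inner_map_map _ _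
    _ = 0 := hv _ (rep_mem_const G g⁻¹ u hu)

lemma rep_symm (g : G) : (rep α G g).symm = rep α G g⁻¹ := by rw [map_inv]; rfl

/-- Restriction of a linear isometry equivalence to an invariant submodule. -/
def restrictIso {F : Type u} [NormedAddCommGroup F] [InnerProductSpace ℂ F]
    (H : Submodule ℂ F) (A : F ≃ₗᵢ[ℂ] F) (h : ∀ v ∈ H, A v ∈ H)
    (h' : ∀ v ∈ H, A.symm v ∈ H) : ↥H ≃ₗᵢ[ℂ] ↥H where
  toLinearEquiv :=
  { toFun := fun v => ⟨A v, h v v.2⟩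
    map_add' := fun u v => Subtype.ext (by simp)
    map_smul' := fun c v => Subtype.ext (by simp)
    invFun := fun v => ⟨A.symm v, h' v v.2⟩
    left_inv := fun v => Subtype.ext (by simp)
    right_inv := fun v => Subtype.ext (by simp) }
  norm_map' := fun v => A.norm_map v

variable (α) in
/-- The representation restricted to the orthogonal complement of the constants. -/
def repH : G →* (↥(constSubmodule α)ᗮ ≃ₗᵢ[ℂ] ↥(constSubmodule α)ᗮ) where
  toFun g := restrictIso (constSubmodule α)ᗮ (rep α G g) (rep_mem_orth G g)
      (fun v hv => by rw [rep_symm]; exact rep_mem_orth G g⁻¹ v hv)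
  map_one' := LinearIsometryEquiv.ext fun v => Subtype.ext (by
    show rep α G 1 (v : ℋ) = v
    rw [map_one, LinearIsometryEquiv.coe_one, id_eq])
  map_mul' g₁ g₂ := LinearIsometryEquiv.ext fun v => Subtype.ext (by
    show rep α G (g₁ * g₂) (v : ℋ) = rep α G g₁ (rep α G g₂ (v : ℋ))
    rw [map_mul]; rfl)

lemma repH_coe (g : G) (v : ↥(constSubmodule α)ᗮ) :
    ((repH α G g v : ↥(constSubmodule α)ᗮ) : ℋ) = rep α G g ↑v := rfl

end HMaux

end HMaux

namespace HMaux

variable {α : Type u}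

local notation "ℋ" => lp (fun _ : α => ℂ) 2

variable (G : Type*) [Group G] [MulAction G α]

lemma continuous_rep [DecidableEq α] [TopologicalSpace G]
    (hst : ∀ (x : α) (g₀ : G), {g : G | g • x = g₀ • x} ∈ nhds g₀)
    (v : ℋ) : Continuous fun g : G => rep α G g v := by
  have hsingle : ∀ (x : α) (a : ℂ), Continuous fun g : G => rep α G g (lp.single 2 x a) := by
    intro x a
    rw [continuous_iff_continuousAt]
    intro g₀
    have hev : ∀ᶠ g in nhds g₀,
        rep α G g (lp.single 2 x a) = rep α G g₀ (lp.single 2 x a) := by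
      filter_upwards [hst x g₀] with g hg
      rw [rep_single, rep_single, hg]
    exact Filter.EventuallyEq.continuousAt hev
  have hsum : ∀ s : Finset α,
      Continuous fun g : G => rep α G g (∑ i ∈ s, lp.single 2 i (v i)) := by
    intro s
    simp only [map_sum]
    exact continuous_finset_sum s (fun i _ => hsingle i (v i))
  rw [continuous_iff_continuousAt]
  intro g₀
  rw [ContinuousAt, Metric.tendsto_nhds]
  intro ε hε
  have hv := lp.hasSum_single (by norm_num : (2:ENNReal) ≠ ⊤) v
  obtain ⟨s, hs⟩ := (Metric.tendsto_nhds.1 hv (ε/3) (by linarith)).exists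
  have hc := Metric.tendsto_nhds.1 ((hsum s).continuousAt (x := g₀)) (ε/3) (by linarith)
  filter_upwards [hc] with g hg
  set w : ℋ := ∑ i ∈ s, lp.single 2 i (v i) with hw
  have key : ∀ h : G, dist (rep α G h v) (rep α G h w) = dist v w := by
    intro h
    rw [dist_eq_norm, dist_eq_norm, ← map_sub, (rep α G h).norm_map]
  have h1 : dist (rep α G g v) (rep α G g₀ v) ≤
      dist (rep α G g v) (rep α G g w) + dist (rep α G g w) (rep α G g₀ w) +
        dist (rep α G g₀ w) (rep α G g₀ v) := dist_triangle4 _ _ _ _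
  have h2 : dist v w < ε/3 := by rw [dist_comm]; exact hs
  have h3 := key g
  have h4 : dist (rep α G g₀ w) (rep α G g₀ v) = dist v w := by rw [dist_comm]; exact key g₀
  linarith

lemma no_invariant (htrans : ∀ x y : α, ∃ g : G, g • x = y)
    (v : ↥(constSubmodule α)ᗮ) (hfix : ∀ g : G, repH α G g v = v) : v = 0 := by
  have hv : ∀ g : G, rep α G g (v : ℋ) = ↑v := fun g => by
    rw [← repH_coe]; exact congrArg Subtype.val (hfix g)
  have hconst : (v : ℋ) ∈ constSubmodule α := by
    intro x y
    obtain ⟨g, hg⟩ := htrans x y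
    have h := congrFun (congrArg (fun f : ℋ => (f : ∀ _ : α, ℂ)) (hv g⁻¹)) x
    simp only at h
    rw [rep_apply, inv_inv, hg] at h
    exact h.symm
  have h0 : (inner ℂ (v : ℋ) (v : ℋ) : ℂ) =  0 :=
    (Submodule.mem_orthogonal _ _).1 v.2 _ hconst
  exact Subtype.ext (inner_self_eq_zero.1 h0)

end HMaux

/-- If a topological bornological group `(G, B)` has the Howe–Moore property, then every
proper open subgroup of `G` is bounded. -/
theorem proper_open_subgroup_bounded_of_howeMoore
    {G : Type u} [Group G] [TopologicalSpace G] [IsTopologicalGroup G]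
    (B : GroupBornology G)
    (hCB : ∀ A ∈ B.sets, CoarselyBounded A)
    (howeMoore : ∀ (K : Type u) (_ : NormedAddCommGroup K), ∀ (_ : InnerProductSpace ℂ K),
      ∀ (_ : CompleteSpace K), ∀ π : G →* (K ≃ₗᵢ[ℂ] K),
      (∀ ξ : K, Continuous fun g => π g ξ) →
      (¬ ∃ ξ : K, ξ ≠ 0 ∧ ∀ g : G, π g ξ = ξ) →
      ∀ ξ η : K, ∀ ε > (0 : ℝ), ∃ B₀ ∈ B.sets, ∀ g ∉ B₀, ‖(inner ℂ (π g ξ) η : ℂ)‖ < ε)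
    (U : Subgroup G) (hUopen : IsOpen (U : Set G)) (hUproper : U ≠ ⊤) :
    (U : Set G) ∈ B.sets := by
  classical
  obtain ⟨g₀, hg₀⟩ : ∃ g₀ : G, g₀ ∉ U := by
    by_contra h
    push_neg at h
    exact hUproper ((Subgroup.eq_top_iff' U).2 h)
  have hst : ∀ (x : G ⧸ U) (h₀ : G), {g : G | g • x = h₀ • x} ∈ nhds h₀ := by
    intro x h₀
    obtain ⟨b, rfl⟩ := QuotientGroup.mk_surjective x
    have hopen : IsOpen {g : G | (h₀ * b)⁻¹ * (g * b) ∈ U} :=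
      hUopen.preimage (continuous_const.mul (continuous_id.mul continuous_const))
    have hmem : h₀ ∈ {g : G | (h₀ * b)⁻¹ * (g * b) ∈ U} := by
      simp only [Set.mem_setOf_eq, inv_mul_cancel]
      exact U.one_mem
    refine Filter.mem_of_superset (hopen.mem_nhds hmem) ?_
    intro g hg
    show g • (QuotientGroup.mk b : G ⧸ U) = h₀ • (QuotientGroup.mk b : G ⧸ U)
    rw [MulAction.Quotient.smul_mk, MulAction.Quotient.smul_mk]
    exact (QuotientGroup.eq.2 hg).symm
  have htrans : ∀ x y : G ⧸ U, ∃ g : G, g • x = y := by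
    intro x y
    obtain ⟨a, rfl⟩ := QuotientGroup.mk_surjective x
    obtain ⟨b, rfl⟩ := QuotientGroup.mk_surjective y
    exact ⟨b * a⁻¹, by rw [MulAction.Quotient.smul_mk, smul_eq_mul, inv_mul_cancel_right]⟩
  let π := HMaux.repH (G ⧸ U) G
  have hcont : ∀ ξ : ↥(HMaux.constSubmodule (G ⧸ U))ᗮ, Continuous fun g => π g ξ := by
    intro ξ
    exact (HMaux.continuous_rep G hst (ξ : lp (fun _ : G ⧸ U => ℂ) 2)).subtype_mk _
  have hinv : ¬ ∃ ξ : ↥(HMaux.constSubmodule (G ⧸ U))ᗮ, ξ ≠ 0 ∧ ∀ g : G, π g ξ = ξ := by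
    rintro ⟨ξ, hne, hfix⟩
    exact hne (HMaux.no_invariant G htrans ξ hfix)
  set x1 : G ⧸ U := QuotientGroup.mk 1 with hx1
  set x2 : G ⧸ U := QuotientGroup.mk g₀ with hx2
  have hx12 : x1 ≠ x2 := fun h => hg₀ (by simpa using QuotientGroup.eq.1 h)
  set s1 : lp (fun _ : G ⧸ U => ℂ) 2 := lp.single 2 x1 1 with hs1
  set s2 : lp (fun _ : G ⧸ U => ℂ) 2 := lp.single 2 x2 1 with hs2
  have hmem : s1 - s2 ∈ (HMaux.constSubmodule (G ⧸ U))ᗮ := by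
    rw [Submodule.mem_orthogonal]
    intro u hu
    rw [inner_sub_right, hs1, hs2, lp.inner_single_right, lp.inner_single_right,
      (HMaux.mem_constSubmodule_iff.1 hu) x1 x2, sub_self]
  set ξ : ↥(HMaux.constSubmodule (G ⧸ U))ᗮ := ⟨s1 - s2, hmem⟩ with hξ
  obtain ⟨B₀, hB₀, hsmall⟩ := howeMoore (↥(HMaux.constSubmodule (G ⧸ U))ᗮ)
    inferInstance inferInstance inferInstance π hcont hinv ξ ξ 1 one_pos
  refine B.subset_mem B₀ hB₀ _ (fun g hgU => ?_)
  by_contra hgB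
  have hlt := hsmall g hgB
  have hgx1 : g • x1 = x1 := by
    rw [hx1, MulAction.Quotient.smul_mk, smul_eq_mul, mul_one]
    exact QuotientGroup.eq.2 (by simpa using U.inv_mem hgU)
  have hgx2 : (g • x2 : G ⧸ U) = QuotientGroup.mk (g * g₀) := by
    rw [hx2, MulAction.Quotient.smul_mk, smul_eq_mul]
  have hy1 : (QuotientGroup.mk (g * g₀) : G ⧸ U) ≠ x1 := by
    intro h
    have h1 := QuotientGroup.eq.1 h
    simp only [mul_one, mul_inv_rev] at h1
    have h2 : g * g₀ ∈ U := by simpa using U.inv_mem h1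
    exact hg₀ (by simpa using U.mul_mem (U.inv_mem hgU) h2)
  have hrep : ((π g ξ : ↥(HMaux.constSubmodule (G ⧸ U))ᗮ) : lp (fun _ : G ⧸ U => ℂ) 2)
      = lp.single 2 x1 1 - lp.single 2 (QuotientGroup.mk (g * g₀)) 1 := by
    rw [HMaux.repH_coe]
    show HMaux.rep (G ⧸ U) G g (s1 - s2) = _
    rw [map_sub, hs1, hs2, HMaux.rep_single, HMaux.rep_single, hgx1, hgx2]
  have e1 : (s1 - s2 : lp (fun _ : G ⧸ U => ℂ) 2) x1 = 1 := by
    rw [lp.coeFn_sub, Pi.sub_apply, hs1, hs2, lp.single_apply_self,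
      lp.single_apply_ne _ _ _ hx12, sub_zero]
  have e2 : (s1 - s2 : lp (fun _ : G ⧸ U => ℂ) 2) (QuotientGroup.mk (g * g₀))
      = - s2 (QuotientGroup.mk (g * g₀)) := by
    rw [lp.coeFn_sub, Pi.sub_apply, hs1, lp.single_apply_ne _ _ _ hy1, zero_sub]
  have hInner : (inner ℂ (π g ξ) ξ : ℂ) = 1 + s2 (QuotientGroup.mk (g * g₀)) := by
    rw [Submodule.coe_inner, hrep]
    show (inner ℂ (lp.single 2 x1 1 - lp.single 2 (QuotientGroup.mk (g * g₀)) 1)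
      (s1 - s2) : ℂ) = _
    rw [inner_sub_left, lp.inner_single_left, lp.inner_single_left, e1, e2]
    simp [RCLike.inner_apply]
  by_cases ht : (QuotientGroup.mk (g * g₀) : G ⧸ U) = x2
  · rw [hInner, ht, hs2, lp.single_apply_self] at hlt
    norm_num at hlt
  · rw [hInner, hs2, lp.single_apply_ne _ _ _ ht] at hlt
    norm_num at hlt
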